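/- The rainbow vector v_{∩∩_N} = (1/(q^{-2}-1)^N)·([2]^N/[N+1]!)·∑_{l=0}^N (-1)^l q^{l(N-l-1)} (θ_l^{(N)} ⊗ θ_{N-l}^{(N)}) ∈ M_2^{⊗2N} satisfies E.v_{∩∩_N} = 0 and K.v_{∩∩_N} = v_{∩∩_N}. -/

import Mathlib

open Finset

noncomputable section

/-- The weight (number of `1`s) of a basis index of `M₂^{⊗n}`: here `M₂^{⊗n}` is modelled
concretely as functions `(Fin n → Fin 2) → ℂ` on the set of basis index tuples. -/
def wt {n : ℕ} (g : Fin n → Fin 2) : ℕ := ∑ i, (g i : ℕ)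

/-- The action of `K` on `M₂^{⊗n}`: `K.e_f = q^{n - 2·wt f}·e_f`. -/
def Kact (q : ℂ) (n : ℕ) (v : (Fin n → Fin 2) → ℂ) : (Fin n → Fin 2) → ℂ :=
  fun g => q ^ ((n : ℤ) - 2 * (wt g : ℤ)) * v g

/-- The action of `E` on `M₂^{⊗n}` via the iterated coproduct
`Δ⁽ⁿ⁾(E) = ∑ᵢ 1⊗⋯⊗1⊗E⊗K⊗⋯⊗K` (slot `0` rightmost). -/
def Eact (q : ℂ) (n : ℕ) (v : (Fin n → Fin 2) → ℂ) : (Fin n → Fin 2) → ℂ :=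
  fun g => ∑ i ∈ Finset.univ.filter (fun i => g i = 0),
    q ^ (∑ j ∈ Finset.univ.filter (fun j => j < i), ((1 : ℤ) - 2 * ((g j : ℕ) : ℤ))) *
      v (Function.update g i 1)

/-- The action of `F` on `M₂^{⊗n}` via `Δ⁽ⁿ⁾(F) = ∑ᵢ K⁻¹⊗⋯⊗K⁻¹⊗F⊗1⊗⋯⊗1`. -/
def Fdown (q : ℂ) (n : ℕ) (v : (Fin n → Fin 2) → ℂ) : (Fin n → Fin 2) → ℂ :=
  fun g => ∑ i ∈ Finset.univ.filter (fun i => g i = 1),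
    q ^ (-∑ j ∈ Finset.univ.filter (fun j => i < j), ((1 : ℤ) - 2 * ((g j : ℕ) : ℤ))) *
      v (Function.update g i 0)

/-- The highest weight vector `e₀ ⊗ ⋯ ⊗ e₀` of `M₂^{⊗n}`. -/
def delta0 (n : ℕ) : (Fin n → Fin 2) → ℂ := fun g => if g = fun _ => 0 then 1 else 0

/-- `θ_l^{(n)} = F^l.(e₀ ⊗ ⋯ ⊗ e₀)`, spanning the weight spaces of the irreducible
subrepresentation `M_{n+1} ⊂ M₂^{⊗n}` generated by `e₀ ⊗ ⋯ ⊗ e₀`. -/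
def theta (q : ℂ) (n l : ℕ) : (Fin n → Fin 2) → ℂ := (Fdown q n)^[l] (delta0 n)

/-- The condition `π̂_j(v) = 0`, where the singlet functional `π̂` is applied at the two
consecutive tensor slots `a` and `b` (with `b = a + 1`), using the values
`π̂(e₀⊗e₀) = π̂(e₁⊗e₁) = 0`, `π̂(e₀⊗e₁) = (q⁻¹-q)/[2]`, `π̂(e₁⊗e₀) = (1-q⁻²)/[2]`
(the left tensor factor is the higher slot `b`). -/
def PihatZero (q : ℂ) (n : ℕ) (a b : Fin n) (v : (Fin n → Fin 2) → ℂ) : Prop :=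
  ∀ g : Fin n → Fin 2,
    ((q⁻¹ - q) / (q + q⁻¹)) * v (Function.update (Function.update g b 0) a 1) +
      ((1 - q⁻¹ ^ 2) / (q + q⁻¹)) * v (Function.update (Function.update g b 1) a 0) = 0


/-- The q-integer `[m]`. -/
def qint (q : ℂ) (m : ℤ) : ℂ := (q ^ m - q ^ (-m)) / (q - q⁻¹)

/-- The q-factorial `[n]! = [n][n-1]⋯[2][1]`. -/
def qfact (q : ℂ) (n : ℕ) : ℂ := ∏ k ∈ Finset.range n, qint q ((k : ℤ) + 1)

/-- The rainbow vector
`v_{∩∩_N} = (1/(q⁻²-1)^N)·([2]^N/[N+1]!)·∑_{l=0}^N (-1)^l q^{l(N-l-1)} (θ_l^{(N)} ⊗ θ_{N-l}^{(N)})`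
in `M₂^{⊗2N}`, where the left tensor factor `θ_l^{(N)}` occupies the `N` higher slots. -/
def rainbowVec (q : ℂ) (N : ℕ) : (Fin (2 * N) → Fin 2) → ℂ :=
  (((q ^ (-2 : ℤ) - 1) ^ N)⁻¹ * (q + q⁻¹) ^ N / qfact q (N + 1)) •
    ∑ l ∈ Finset.range (N + 1),
      ((-1 : ℂ) ^ l * q ^ ((l : ℤ) * ((N : ℤ) - (l : ℤ) - 1))) •
        (fun g : Fin (2 * N) → Fin 2 =>
          theta q N l (fun i : Fin N => g ⟨(i : ℕ) + N, by have := i.isLt; omega⟩) *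
            theta q N (N - l) (fun i : Fin N => g ⟨(i : ℕ), by have := i.isLt; omega⟩))


/-! ### Auxiliary lemmas -/

lemma wt_update {n : ℕ} (g : Fin n → Fin 2) (i : Fin n) (a : Fin 2) :
    (wt (Function.update g i a) : ℤ) = (wt g : ℤ) - ((g i : ℕ) : ℤ) + ((a : ℕ) : ℤ) := by
  unfold wt
  rw [show (Finset.univ : Finset (Fin n)) = Finset.univ from rfl]
  push_cast
  rw [← Finset.sum_erase_add Finset.univ _ (Finset.mem_univ i),
      ← Finset.sum_erase_add Finset.univ (fun j => ((g j : ℕ) : ℤ)) (Finset.mem_univ i)]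
  have h1 : ∀ j ∈ Finset.univ.erase i, ((Function.update g i a j : ℕ) : ℤ) = ((g j : ℕ) : ℤ) := by
    intro j hj
    rw [Function.update_of_ne (Finset.ne_of_mem_erase hj)]
  rw [Finset.sum_congr rfl h1, Function.update_self]
  ring

lemma theta_succ (q : ℂ) (n l : ℕ) :
    theta q n (l + 1) = Fdown q n (theta q n l) := by
  unfold theta
  rw [Function.iterate_succ_apply']

lemma theta_supp (q : ℂ) (n : ℕ) : ∀ l (g : Fin n → Fin 2), wt g ≠ l → theta q n l g = 0 := by
  intro l
  induction l with
  | zero =>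
    intro g hg
    have : g ≠ fun _ => 0 := by
      intro h; apply hg; unfold wt; rw [h]; simp
    simp [theta, delta0, this]
  | succ l ih =>
    intro g hg
    rw [theta_succ]
    unfold Fdown
    apply Finset.sum_eq_zero
    intro i hi
    simp only [Finset.mem_filter] at hi
    have h0 : theta q n l (Function.update g i 0) = 0 := by
      apply ih
      intro hw
      apply hg
      have := wt_update g i 0
      rw [hi.2] at this
      simp at this
      omega
    rw [h0, mul_zero]

lemma tele_aux (q : ℂ) (hq : q ≠ 0) (s : ℕ → ℤ) (hs : ∀ i, s i = 1 ∨ s i = -1) (n : ℕ) :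
    (q - q⁻¹) * ∑ i ∈ Finset.range n, (s i : ℂ) * q ^ (2 * (∑ j ∈ Finset.range i, s j) + s i)
      = q ^ (2 * ∑ j ∈ Finset.range n, s j) - 1 := by
  induction n with
  | zero => simp
  | succ n ih =>
    rw [Finset.sum_range_succ, Finset.sum_range_succ (f := s), mul_add, ih]
    have key : (q - q⁻¹) * ((s n : ℂ) * q ^ (2 * (∑ j ∈ Finset.range n, s j) + s n))
        = q ^ (2 * (∑ j ∈ Finset.range n, s j + s n)) - q ^ (2 * ∑ j ∈ Finset.range n, s j) := by
      set a := ∑ j ∈ Finset.range n, s j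
      have h2 : q ^ (2:ℤ) = q * q := by
        rw [show (2:ℤ) = 1 + 1 from rfl, zpow_add₀ hq, zpow_one]
      have hm2 : q ^ (-2:ℤ) = (q * q)⁻¹ := by
        rw [show (-2:ℤ) = -(2) from rfl, zpow_neg, h2]
      have hm1 : q ^ (-1:ℤ) = q⁻¹ := by
        rw [show (-1:ℤ) = -(1) from rfl, zpow_neg, zpow_one]
      rcases hs n with h | h <;> rw [h] <;> push_cast
      · rw [show (2:ℤ) * (a + 1) = 2*a + 2 by ring, zpow_add₀ hq, zpow_add₀ hq,
          zpow_one, h2]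
        field_simp
      · rw [show (2:ℤ) * (a + -1) = 2*a + -2 by ring, zpow_add₀ hq, zpow_add₀ hq,
          hm1, hm2]
        field_simp
        ring
    rw [key]; ring

/-- sign of a slot -/
def sgn {n : ℕ} (g : Fin n → Fin 2) (j : Fin n) : ℤ := 1 - 2 * ((g j : ℕ) : ℤ)

def Aexp {n : ℕ} (g : Fin n → Fin 2) (i : Fin n) : ℤ :=
  ∑ j ∈ Finset.univ.filter (fun j => j < i), sgn g j

def Bexp {n : ℕ} (g : Fin n → Fin 2) (i : Fin n) : ℤ :=
  ∑ j ∈ Finset.univ.filter (fun j => i < j), sgn g j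

lemma Eact_eq (q : ℂ) (n : ℕ) (v : (Fin n → Fin 2) → ℂ) (g : Fin n → Fin 2) :
    Eact q n v g = ∑ i ∈ Finset.univ.filter (fun i => g i = 0),
      q ^ (Aexp g i) * v (Function.update g i 1) := rfl

lemma Fdown_eq (q : ℂ) (n : ℕ) (v : (Fin n → Fin 2) → ℂ) (g : Fin n → Fin 2) :
    Fdown q n v g = ∑ i ∈ Finset.univ.filter (fun i => g i = 1),
      q ^ (-Bexp g i) * v (Function.update g i 0) := rfl

lemma sgn_update_ne {n : ℕ} (g : Fin n → Fin 2) (k j : Fin n) (a : Fin 2) (h : j ≠ k) :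
    sgn (Function.update g k a) j = sgn g j := by
  unfold sgn; rw [Function.update_of_ne h]

lemma Aexp_update_of_le {n : ℕ} (g : Fin n → Fin 2) (i k : Fin n) (a : Fin 2) (h : i ≤ k) :
    Aexp (Function.update g k a) i = Aexp g i := by
  unfold Aexp
  refine Finset.sum_congr rfl fun j hj => ?_
  simp only [Finset.mem_filter] at hj
  exact sgn_update_ne g k j a (by intro e; subst e; exact absurd (lt_of_lt_of_le hj.2 h) (lt_irrefl _))

lemma Bexp_update_of_le {n : ℕ} (g : Fin n → Fin 2) (i k : Fin n) (a : Fin 2) (h : k ≤ i) :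
    Bexp (Function.update g k a) i = Bexp g i := by
  unfold Bexp
  refine Finset.sum_congr rfl fun j hj => ?_
  simp only [Finset.mem_filter] at hj
  exact sgn_update_ne g k j a (by intro e; subst e; exact absurd (lt_of_le_of_lt h hj.2) (lt_irrefl _))

lemma Aexp_update_of_lt {n : ℕ} (g : Fin n → Fin 2) (i k : Fin n) (a : Fin 2) (h : k < i) :
    Aexp (Function.update g k a) i = Aexp g i - sgn g k + (1 - 2 * ((a : ℕ) : ℤ)) := by
  unfold Aexp
  have hk : k ∈ Finset.univ.filter (fun j => j < i) := by simp [h]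
  rw [← Finset.sum_erase_add _ _ hk, ← Finset.sum_erase_add _ (sgn g) hk]
  have h1 : ∀ j ∈ (Finset.univ.filter (fun j => j < i)).erase k,
      sgn (Function.update g k a) j = sgn g j := fun j hj =>
    sgn_update_ne g k j a (Finset.ne_of_mem_erase hj)
  rw [Finset.sum_congr rfl h1]
  have : sgn (Function.update g k a) k = 1 - 2 * ((a : ℕ) : ℤ) := by
    unfold sgn; rw [Function.update_self]
  rw [this]; ring

lemma Bexp_update_of_lt {n : ℕ} (g : Fin n → Fin 2) (i k : Fin n) (a : Fin 2) (h : i < k) :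
    Bexp (Function.update g k a) i = Bexp g i - sgn g k + (1 - 2 * ((a : ℕ) : ℤ)) := by
  unfold Bexp
  have hk : k ∈ Finset.univ.filter (fun j => i < j) := by simp [h]
  rw [← Finset.sum_erase_add _ _ hk, ← Finset.sum_erase_add _ (sgn g) hk]
  have h1 : ∀ j ∈ (Finset.univ.filter (fun j => i < j)).erase k,
      sgn (Function.update g k a) j = sgn g j := fun j hj =>
    sgn_update_ne g k j a (Finset.ne_of_mem_erase hj)
  rw [Finset.sum_congr rfl h1]
  have : sgn (Function.update g k a) k = 1 - 2 * ((a : ℕ) : ℤ) := by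
    unfold sgn; rw [Function.update_self]
  rw [this]; ring

lemma total_sgn {n : ℕ} (g : Fin n → Fin 2) :
    ∑ j, sgn g j = (n : ℤ) - 2 * (wt g : ℤ) := by
  unfold sgn wt
  push_cast
  rw [Finset.sum_sub_distrib, ← Finset.mul_sum]
  simp [Finset.card_univ]

lemma ABS_total {n : ℕ} (g : Fin n → Fin 2) (i : Fin n) :
    Aexp g i + sgn g i + Bexp g i = (n : ℤ) - 2 * (wt g : ℤ) := by
  rw [← total_sgn g]
  rw [← Finset.sum_filter_add_sum_filter_not Finset.univ (fun j => j < i) (sgn g)]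
  have : Finset.univ.filter (fun j => ¬ j < i) = insert i (Finset.univ.filter (fun j => i < j)) := by
    ext j
    simp only [Finset.mem_filter, Finset.mem_insert, Finset.mem_univ, true_and]
    constructor
    · intro h
      rcases lt_or_eq_of_le (le_of_not_gt h) with h' | h'
      · exact Or.inr h'
      · exact Or.inl h'.symm
    · rintro (rfl | h)
      · exact lt_irrefl _
      · exact not_lt_of_gt h
  rw [this, Finset.sum_insert (by simp)]
  unfold Aexp Bexp
  ring

lemma tele_fin (q : ℂ) (hq : q ≠ 0) (hq2 : q - q⁻¹ ≠ 0) {n : ℕ} (g : Fin n → Fin 2) :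
    ∑ i : Fin n, ((sgn g i : ℂ)) * q ^ (Aexp g i - Bexp g i)
      = qint q ((n : ℤ) - 2 * (wt g : ℤ)) := by
  set T : ℤ := (n : ℤ) - 2 * (wt g : ℤ) with hT
  set s' : ℕ → ℤ := fun j => if h : j < n then sgn g ⟨j, h⟩ else 1 with hs'
  have hsv : ∀ i : Fin n, s' (i : ℕ) = sgn g i := by
    intro i; simp [hs', i.isLt]
  have hs : ∀ j, s' j = 1 ∨ s' j = -1 := by
    intro j
    rw [hs']
    by_cases h : j < n
    · simp only [dif_pos h]
      unfold sgn
      have : (g ⟨j, h⟩ : ℕ) = 0 ∨ (g ⟨j, h⟩ : ℕ) = 1 := by omega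
      rcases this with h' | h' <;> rw [h'] <;> norm_num
    · simp [h]
  have hA : ∀ i : Fin n, Aexp g i = ∑ j ∈ Finset.range (i : ℕ), s' j := by
    intro i
    unfold Aexp
    rw [Finset.sum_filter]
    have step1 : ∑ a : Fin n, (if a < i then sgn g a else 0)
        = ∑ a : Fin n, (fun j : ℕ => if j < (i : ℕ) then s' j else 0) (a : ℕ) := by
      refine Finset.sum_congr rfl fun a _ => ?_
      simp only [hs', Fin.lt_def]
      by_cases h : (a : ℕ) < (i : ℕ)
      · simp [h, a.isLt]
      · simp [h]
    rw [step1, Fin.sum_univ_eq_sum_range (fun j : ℕ => if j < (i : ℕ) then s' j else 0) n,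
      ← Finset.sum_filter]
    congr 1
    ext j
    simp only [Finset.mem_filter, Finset.mem_range]
    constructor
    · intro h; exact h.2
    · intro h; exact ⟨lt_trans h i.isLt, h⟩
  have hTsum : ∑ j ∈ Finset.range n, s' j = T := by
    rw [hT, ← total_sgn g]
    have : ∑ j : Fin n, sgn g j = ∑ j : Fin n, s' (j : ℕ) := by
      refine Finset.sum_congr rfl fun j _ => (hsv j).symm
    rw [this, Fin.sum_univ_eq_sum_range (fun j : ℕ => s' j) n]
  calc ∑ i : Fin n, ((sgn g i : ℂ)) * q ^ (Aexp g i - Bexp g i)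
      = ∑ i : Fin n, ((s' (i:ℕ) : ℂ) * q ^ (2 * (∑ j ∈ Finset.range (i:ℕ), s' j) + s' (i:ℕ))) * q ^ (-T) := by
        refine Finset.sum_congr rfl fun i _ => ?_
        have he : Aexp g i - Bexp g i = (2 * Aexp g i + sgn g i) + -T := by
          have := ABS_total g i
          rw [← hT] at this
          omega
        rw [he, zpow_add₀ hq, hA i, ← hsv i]
        ring
    _ = (∑ i ∈ Finset.range n, (s' i : ℂ) * q ^ (2 * (∑ j ∈ Finset.range i, s' j) + s' i)) * q ^ (-T) := by
        rw [← Finset.sum_mul,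
          Fin.sum_univ_eq_sum_range (fun i => (s' i : ℂ) * q ^ (2 * (∑ j ∈ Finset.range i, s' j) + s' i))]
    _ = qint q T := by
        have haux := tele_aux q hq s' hs n
        rw [hTsum] at haux
        have hsum : ∑ i ∈ Finset.range n, (s' i : ℂ) * q ^ (2 * (∑ j ∈ Finset.range i, s' j) + s' i)
            = (q ^ (2 * T) - 1) / (q - q⁻¹) := by
          rw [eq_div_iff hq2]
          rw [mul_comm] at haux
          exact haux
        rw [hsum]
        unfold qint
        rw [show (2 : ℤ) * T = T + T by ring, zpow_add₀ hq, zpow_neg]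
        have hqT : q ^ T ≠ 0 := zpow_ne_zero T hq
        field_simp

lemma EF_comm (q : ℂ) (hq : q ≠ 0) (hq2 : q - q⁻¹ ≠ 0) {n : ℕ}
    (v : (Fin n → Fin 2) → ℂ) (g : Fin n → Fin 2) :
    Eact q n (Fdown q n v) g
      = Fdown q n (Eact q n v) g + qint q ((n : ℤ) - 2 * (wt g : ℤ)) * v g := by
  set Z := Finset.univ.filter (fun i => g i = 0) with hZ
  set O := Finset.univ.filter (fun i => g i = 1) with hO
  have hfilZ : ∀ i : Fin n, g i = 0 →
      Finset.univ.filter (fun k => Function.update g i 1 k = 1) = insert i O := by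
    intro i hi
    ext k
    simp only [hO, Finset.mem_filter, Finset.mem_insert, Finset.mem_univ, true_and]
    by_cases h : k = i
    · subst h; simp [hi]
    · rw [Function.update_of_ne h]; tauto
  have hfilO : ∀ k : Fin n, g k = 1 →
      Finset.univ.filter (fun i => Function.update g k 0 i = 0) = insert k Z := by
    intro k hk
    ext i
    simp only [hZ, Finset.mem_filter, Finset.mem_insert, Finset.mem_univ, true_and]
    by_cases h : i = k
    · subst h; simp [hk]
    · rw [Function.update_of_ne h]; tauto
  have hEF : Eact q n (Fdown q n v) g
      = ∑ i ∈ Z, (q ^ (Aexp g i - Bexp g i) * v g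
        + ∑ k ∈ O, q ^ (Aexp g i) * q ^ (-Bexp (Function.update g i 1) k) *
            v (Function.update (Function.update g i 1) k 0)) := by
    rw [Eact_eq]
    refine Finset.sum_congr rfl fun i hi => ?_
    have hgi : g i = 0 := (Finset.mem_filter.mp hi).2
    have hiO : i ∉ O := by simp [hO, hgi]
    rw [Fdown_eq, hfilZ i hgi, Finset.sum_insert hiO,
        Bexp_update_of_le g i i 1 le_rfl, Function.update_idem]
    have hg : Function.update g i 0 = g := by rw [← hgi, Function.update_eq_self]
    rw [hg, mul_add, Finset.mul_sum]
    congr 1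
    · rw [← mul_assoc, ← zpow_add₀ hq, ← sub_eq_add_neg]
    · refine Finset.sum_congr rfl fun k hk => ?_
      ring
  have hFE : Fdown q n (Eact q n v) g
      = ∑ k ∈ O, (q ^ (Aexp g k - Bexp g k) * v g
        + ∑ i ∈ Z, q ^ (-Bexp g k) * q ^ (Aexp (Function.update g k 0) i) *
            v (Function.update (Function.update g k 0) i 1)) := by
    rw [Fdown_eq]
    refine Finset.sum_congr rfl fun k hk => ?_
    have hgk : g k = 1 := (Finset.mem_filter.mp hk).2
    have hkZ : k ∉ Z := by simp [hZ, hgk]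
    rw [Eact_eq, hfilO k hgk, Finset.sum_insert hkZ,
        Aexp_update_of_le g k k 0 le_rfl, Function.update_idem]
    have hg : Function.update g k 1 = g := by rw [← hgk, Function.update_eq_self]
    rw [hg, mul_add, Finset.mul_sum]
    congr 1
    · rw [← mul_assoc, ← zpow_add₀ hq, add_comm (-Bexp g k) (Aexp g k), ← sub_eq_add_neg]
    · refine Finset.sum_congr rfl fun i hi => ?_
      ring
  have hoff : ∑ i ∈ Z, ∑ k ∈ O, q ^ (Aexp g i) * q ^ (-Bexp (Function.update g i 1) k) *
          v (Function.update (Function.update g i 1) k 0)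
      = ∑ k ∈ O, ∑ i ∈ Z, q ^ (-Bexp g k) * q ^ (Aexp (Function.update g k 0) i) *
          v (Function.update (Function.update g k 0) i 1) := by
    rw [Finset.sum_comm]
    refine Finset.sum_congr rfl fun k hk => Finset.sum_congr rfl fun i hi => ?_
    have hgi : g i = 0 := (Finset.mem_filter.mp hi).2
    have hgk : g k = 1 := (Finset.mem_filter.mp hk).2
    have hik : i ≠ k := by intro h; rw [h, hgk] at hgi; exact absurd hgi (by decide)
    have hv : Function.update (Function.update g i 1) k 0
        = Function.update (Function.update g k 0) i 1 := Function.update_comm hik _ _ g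
    rw [hv, ← zpow_add₀ hq, ← zpow_add₀ hq]
    congr 2
    have hsi : sgn g i = 1 := by unfold sgn; rw [hgi]; norm_num
    have hsk : sgn g k = -1 := by unfold sgn; rw [hgk]; norm_num
    rcases lt_or_gt_of_ne hik with h | h
    · rw [Bexp_update_of_le g k i 1 h.le, Aexp_update_of_le g i k 0 h.le]
      ring
    · rw [Bexp_update_of_lt g k i 1 h, Aexp_update_of_lt g i k 0 h, hsi, hsk]
      simp only [Fin.val_one, Fin.val_zero]
      push_cast
      ring
  have htele := tele_fin q hq hq2 g
  have hsplit : ∑ i : Fin n, ((sgn g i : ℂ)) * q ^ (Aexp g i - Bexp g i)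
      = ∑ i ∈ Z, q ^ (Aexp g i - Bexp g i) - ∑ k ∈ O, q ^ (Aexp g k - Bexp g k) := by
    rw [← Finset.sum_filter_add_sum_filter_not Finset.univ (fun i => g i = 0)
      (fun i => ((sgn g i : ℂ)) * q ^ (Aexp g i - Bexp g i))]
    have hONeg : Finset.univ.filter (fun i => ¬ g i = 0) = O := by
      ext i
      simp only [hO, Finset.mem_filter, Finset.mem_univ, true_and]
      rcases Fin.exists_fin_two.mp ⟨g i, rfl⟩ with h | h <;> simp_all
    rw [hONeg]
    rw [sub_eq_add_neg, ← Finset.sum_neg_distrib]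
    congr 1
    · refine Finset.sum_congr rfl fun i hi => ?_
      have hgi : g i = 0 := (Finset.mem_filter.mp hi).2
      have : sgn g i = 1 := by unfold sgn; rw [hgi]; norm_num
      rw [this]; push_cast; ring
    · refine Finset.sum_congr rfl fun i hi => ?_
      have hgi : g i = 1 := (Finset.mem_filter.mp hi).2
      have : sgn g i = -1 := by unfold sgn; rw [hgi]; norm_num
      rw [this]; push_cast; ring
  have hZD : ∑ i ∈ Z, q ^ (Aexp g i - Bexp g i)
      = ∑ k ∈ O, q ^ (Aexp g k - Bexp g k) + qint q ((n : ℤ) - 2 * (wt g : ℤ)) := by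
    rw [← htele, hsplit]; ring
  rw [hEF, hFE, Finset.sum_add_distrib, Finset.sum_add_distrib, hoff,
      ← Finset.sum_mul, ← Finset.sum_mul, hZD]
  ring

lemma qint_one (q : ℂ) (hq2 : q - q⁻¹ ≠ 0) : qint q 1 = 1 := by
  unfold qint
  rw [zpow_one, show (-1 : ℤ) = -(1) from rfl, zpow_neg, zpow_one, div_self hq2]

lemma qint_mul (q : ℂ) (hq2 : q - q⁻¹ ≠ 0) (a : ℤ) :
    qint q a * (q - q⁻¹) = q ^ a - q ^ (-a) := div_mul_cancel₀ _ hq2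

lemma qint_id (q : ℂ) (hq : q ≠ 0) (hq2 : q - q⁻¹ ≠ 0) (n m : ℤ) :
    qint q m * qint q (n + 1 - m) + qint q (n - 2 * m)
      = qint q (m + 1) * qint q (n - m) := by
  have hm : q ^ m ≠ 0 := zpow_ne_zero m hq
  have hn : q ^ n ≠ 0 := zpow_ne_zero n hq
  have key := qint_mul q hq2
  suffices h : (qint q m * qint q (n + 1 - m) + qint q (n - 2 * m)) * ((q - q⁻¹) * (q - q⁻¹))
      = (qint q (m + 1) * qint q (n - m)) * ((q - q⁻¹) * (q - q⁻¹)) from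
    mul_right_cancel₀ (mul_ne_zero hq2 hq2) h
  have eL : (qint q m * qint q (n + 1 - m) + qint q (n - 2 * m)) * ((q - q⁻¹) * (q - q⁻¹))
      = (q ^ m - q ^ (-m)) * (q ^ (n + 1 - m) - q ^ (-(n + 1 - m)))
        + (q ^ (n - 2 * m) - q ^ (-(n - 2 * m))) * (q - q⁻¹) := by
    rw [← key m, ← key (n + 1 - m), ← key (n - 2 * m)]; ring
  have eR : (qint q (m + 1) * qint q (n - m)) * ((q - q⁻¹) * (q - q⁻¹))
      = (q ^ (m + 1) - q ^ (-(m + 1))) * (q ^ (n - m) - q ^ (-(n - m))) := by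
    rw [← key (m + 1), ← key (n - m)]; ring
  rw [eL, eR]
  rw [show n + 1 - m = n + 1 + -m by ring, show n - 2 * m = n + -m + -m by ring,
      show n - m = n + -m by ring]
  simp only [zpow_add₀ hq, zpow_neg, zpow_one, neg_add, neg_neg, mul_inv, inv_inv]
  ring

lemma Fdown_zero (q : ℂ) (n : ℕ) : Fdown q n (fun _ => 0) = fun _ => 0 := by
  funext g; unfold Fdown; simp

lemma Fdown_smul (q : ℂ) (n : ℕ) (c : ℂ) (w : (Fin n → Fin 2) → ℂ) :
    Fdown q n (fun g => c * w g) = fun g => c * Fdown q n w g := by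
  funext g; unfold Fdown
  rw [Finset.mul_sum]
  refine Finset.sum_congr rfl fun i _ => ?_
  ring

lemma Eact_theta_zero (q : ℂ) (n : ℕ) : Eact q n (theta q n 0) = fun _ => 0 := by
  funext g
  unfold Eact theta
  simp only [Function.iterate_zero, id]
  refine Finset.sum_eq_zero fun i hi => ?_
  have : Function.update g i 1 ≠ fun _ => 0 := by
    intro h
    have := congrFun h i
    rw [Function.update_self] at this
    exact absurd this (by decide)
  unfold delta0
  rw [if_neg this, mul_zero]

lemma theta_supp_mul (q c c' : ℂ) (n l : ℕ)
    (h : ∀ g : Fin n → Fin 2, wt g = l → c = c') (g : Fin n → Fin 2) :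
    c * theta q n l g = c' * theta q n l g := by
  by_cases h0 : theta q n l g = 0
  · rw [h0, mul_zero, mul_zero]
  · have hw : wt g = l := by
      by_contra hw
      exact h0 (theta_supp q n l g hw)
    rw [h g hw]

lemma Eact_theta (q : ℂ) (hq : q ≠ 0) (hq2 : q - q⁻¹ ≠ 0) (n : ℕ) : ∀ l : ℕ,
    Eact q n (theta q n (l + 1))
      = fun g => (qint q ((l : ℤ) + 1) * qint q ((n : ℤ) - (l : ℤ))) * theta q n l g := by
  intro l
  induction l with
  | zero =>
    funext g
    rw [theta_succ, EF_comm q hq hq2, Eact_theta_zero, Fdown_zero]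
    simp only [zero_add, Nat.cast_zero, sub_zero]
    rw [qint_one q hq2, one_mul]
    by_cases h0 : theta q n 0 g = 0
    · rw [h0, mul_zero, mul_zero]
    · have hw : wt g = 0 := by
        by_contra hw
        exact h0 (theta_supp q n 0 g hw)
      rw [hw]
      norm_num
  | succ l ih =>
    funext g
    rw [theta_succ, EF_comm q hq hq2, ih, Fdown_smul, ← theta_succ]
    have h2 : qint q ((n : ℤ) - 2 * (wt g : ℤ)) * theta q n (l + 1) g
        = qint q ((n : ℤ) - 2 * ((l : ℤ) + 1)) * theta q n (l + 1) g := by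
      by_cases h0 : theta q n (l + 1) g = 0
      · rw [h0, mul_zero, mul_zero]
      · have hw : wt g = l + 1 := by
          by_contra hw
          exact h0 (theta_supp q n (l + 1) g hw)
        rw [hw]
        push_cast
        ring_nf
    rw [h2]
    have := qint_id q hq hq2 (n : ℤ) ((l : ℤ) + 1)
    push_cast
    calc qint q ((l:ℤ) + 1) * qint q ((n:ℤ) - (l:ℤ)) * theta q n (l+1) g
          + qint q ((n:ℤ) - 2 * ((l:ℤ) + 1)) * theta q n (l+1) g
        = (qint q ((l:ℤ)+1) * qint q ((n:ℤ) + 1 - ((l:ℤ)+1))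
            + qint q ((n:ℤ) - 2 * ((l:ℤ)+1))) * theta q n (l+1) g := by
          ring_nf
      _ = (qint q ((l:ℤ)+1+1) * qint q ((n:ℤ) - ((l:ℤ)+1))) * theta q n (l+1) g := by
          rw [this]
      _ = qint q ((l:ℤ)+1+1) * qint q ((n:ℤ) - ((l:ℤ)+1)) * theta q n (l+1) g := by ring

def embLo (N : ℕ) : Fin N ↪ Fin (2 * N) :=
  ⟨fun i => ⟨(i : ℕ), by have := i.isLt; omega⟩, by
    intro a b h
    simp only [Fin.mk.injEq] at h
    exact Fin.ext h⟩

def embHi (N : ℕ) : Fin N ↪ Fin (2 * N) :=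
  ⟨fun i => ⟨(i : ℕ) + N, by have := i.isLt; omega⟩, by
    intro a b h
    simp only [Fin.mk.injEq] at h
    exact Fin.ext (by omega)⟩

def lowPart {N : ℕ} (g : Fin (2 * N) → Fin 2) : Fin N → Fin 2 := fun i => g (embLo N i)
def highPart {N : ℕ} (g : Fin (2 * N) → Fin 2) : Fin N → Fin 2 := fun i => g (embHi N i)

lemma cover (N : ℕ) : (Finset.univ.map (embLo N)) ∪ (Finset.univ.map (embHi N))
    = (Finset.univ : Finset (Fin (2 * N))) := by
  ext k
  simp only [Finset.mem_union, Finset.mem_map, Finset.mem_univ, true_and, iff_true, embLo, embHi,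
    Function.Embedding.coeFn_mk]
  by_cases h : (k : ℕ) < N
  · exact Or.inl ⟨⟨(k : ℕ), h⟩, Fin.ext rfl⟩
  · refine Or.inr ⟨⟨(k : ℕ) - N, by have := k.isLt; omega⟩, Fin.ext ?_⟩
    show (k : ℕ) - N + N = k
    omega

lemma disj (N : ℕ) : Disjoint (Finset.univ.map (embLo N)) (Finset.univ.map (embHi N)) := by
  rw [Finset.disjoint_left]
  rintro k hk hk'
  simp only [Finset.mem_map, Finset.mem_univ, true_and, embLo, embHi,
    Function.Embedding.coeFn_mk] at hk hk'
  obtain ⟨a, ha⟩ := hk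
  obtain ⟨b, hb⟩ := hk'
  have h1 : (a : ℕ) = (k : ℕ) := congrArg Fin.val ha
  have h2 : (b : ℕ) + N = (k : ℕ) := congrArg Fin.val hb
  have := a.isLt
  have := b.isLt
  omega

lemma sum_split {M : Type*} [AddCommMonoid M] (N : ℕ) (f : Fin (2 * N) → M) :
    ∑ i, f i = ∑ i : Fin N, f (embLo N i) + ∑ i : Fin N, f (embHi N i) := by
  rw [← Finset.sum_map Finset.univ (embLo N) f, ← Finset.sum_map Finset.univ (embHi N) f,
    ← Finset.sum_union (disj N), cover N]

lemma lowPart_update_lo {N : ℕ} (g : Fin (2 * N) → Fin 2) (i : Fin N) (a : Fin 2) :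
    lowPart (Function.update g (embLo N i) a) = Function.update (lowPart g) i a := by
  funext j
  unfold lowPart
  by_cases h : j = i
  · subst h; rw [Function.update_self, Function.update_self]
  · rw [Function.update_of_ne h, Function.update_of_ne (fun hc => h ((embLo N).injective hc))]

lemma highPart_update_lo {N : ℕ} (g : Fin (2 * N) → Fin 2) (i : Fin N) (a : Fin 2) :
    highPart (Function.update g (embLo N i) a) = highPart g := by
  funext j
  unfold highPart
  refine Function.update_of_ne (fun hc => ?_) _ _
  have : (j : ℕ) + N = (i : ℕ) := congrArg Fin.val hc
  have := i.isLt
  omega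

lemma highPart_update_hi {N : ℕ} (g : Fin (2 * N) → Fin 2) (i : Fin N) (a : Fin 2) :
    highPart (Function.update g (embHi N i) a) = Function.update (highPart g) i a := by
  funext j
  unfold highPart
  by_cases h : j = i
  · subst h; rw [Function.update_self, Function.update_self]
  · rw [Function.update_of_ne h, Function.update_of_ne (fun hc => h ((embHi N).injective hc))]

lemma lowPart_update_hi {N : ℕ} (g : Fin (2 * N) → Fin 2) (i : Fin N) (a : Fin 2) :
    lowPart (Function.update g (embHi N i) a) = lowPart g := by
  funext j
  unfold lowPart
  refine Function.update_of_ne (fun hc => ?_) _ _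
  have : (j : ℕ) = (i : ℕ) + N := congrArg Fin.val hc
  have := j.isLt
  omega

lemma sgn_embLo {N : ℕ} (g : Fin (2 * N) → Fin 2) (j : Fin N) :
    sgn g (embLo N j) = sgn (lowPart g) j := rfl

lemma sgn_embHi {N : ℕ} (g : Fin (2 * N) → Fin 2) (j : Fin N) :
    sgn g (embHi N j) = sgn (highPart g) j := rfl

lemma Aexp_embLo {N : ℕ} (g : Fin (2 * N) → Fin 2) (i : Fin N) :
    Aexp g (embLo N i) = Aexp (lowPart g) i := by
  unfold Aexp
  have hset : Finset.univ.filter (fun j : Fin (2 * N) => j < embLo N i)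
      = (Finset.univ.filter (fun j : Fin N => j < i)).map (embLo N) := by
    ext k
    simp only [Finset.mem_filter, Finset.mem_map, Finset.mem_univ, true_and, embLo,
      Function.Embedding.coeFn_mk, Fin.lt_def]
    constructor
    · intro h
      exact ⟨⟨(k : ℕ), lt_trans h i.isLt⟩, h, Fin.ext rfl⟩
    · rintro ⟨a, ha, rfl⟩
      exact ha
  rw [hset, Finset.sum_map]
  rfl

lemma Aexp_embHi {N : ℕ} (g : Fin (2 * N) → Fin 2) (i : Fin N) :
    Aexp g (embHi N i) = ((N : ℤ) - 2 * (wt (lowPart g) : ℤ)) + Aexp (highPart g) i := by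
  unfold Aexp
  have hset : Finset.univ.filter (fun j : Fin (2 * N) => j < embHi N i)
      = (Finset.univ.map (embLo N)) ∪ (Finset.univ.filter (fun j : Fin N => j < i)).map (embHi N) := by
    ext k
    simp only [Finset.mem_filter, Finset.mem_union, Finset.mem_map, Finset.mem_univ, true_and,
      embLo, embHi, Function.Embedding.coeFn_mk, Fin.lt_def]
    constructor
    · intro h
      by_cases hk : (k : ℕ) < N
      · exact Or.inl ⟨⟨(k : ℕ), hk⟩, Fin.ext rfl⟩
      · refine Or.inr ⟨⟨(k : ℕ) - N, by have := k.isLt; omega⟩, by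
            change (k : ℕ) < (i : ℕ) + N at h; show (k : ℕ) - N < i; omega,
          Fin.ext (by show (k : ℕ) - N + N = k; omega)⟩
    · rintro (⟨a, rfl⟩ | ⟨a, ha, rfl⟩)
      · simp
        have := a.isLt
        show (a : ℕ) < (i : ℕ) + N
        omega
      · simp at ha ⊢
        show (a : ℕ) + N < (i : ℕ) + N
        omega
  have hdisj : Disjoint (Finset.univ.map (embLo N))
      ((Finset.univ.filter (fun j : Fin N => j < i)).map (embHi N)) := by
    rw [Finset.disjoint_left]
    rintro k hk hk'
    simp only [Finset.mem_map, Finset.mem_filter, Finset.mem_univ, true_and, embLo, embHi,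
      Function.Embedding.coeFn_mk] at hk hk'
    obtain ⟨a, ha⟩ := hk
    obtain ⟨b, _, hb⟩ := hk'
    have h1 : (a : ℕ) = (k : ℕ) := congrArg Fin.val ha
    have h2 : (b : ℕ) + N = (k : ℕ) := congrArg Fin.val hb
    have := a.isLt
    omega
  rw [hset, Finset.sum_union hdisj, Finset.sum_map, Finset.sum_map]
  congr 1
  · rw [← total_sgn (lowPart g)]
    rfl

lemma wt_split {N : ℕ} (g : Fin (2 * N) → Fin 2) :
    wt g = wt (lowPart g) + wt (highPart g) := by
  unfold wt
  rw [sum_split N (fun i => ((g i : ℕ)))]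
  rfl

lemma Eact_split (q : ℂ) (hq : q ≠ 0) (N : ℕ) (u w : (Fin N → Fin 2) → ℂ) (g : Fin (2 * N) → Fin 2) :
    Eact q (2 * N) (fun g' => u (highPart g') * w (lowPart g')) g
      = u (highPart g) * Eact q N w (lowPart g)
        + q ^ ((N : ℤ) - 2 * (wt (lowPart g) : ℤ)) * (Eact q N u (highPart g) * w (lowPart g)) := by
  rw [Eact_eq, Finset.sum_filter, sum_split N]
  have hlo : ∀ i : Fin N, g (embLo N i) = lowPart g i := fun _ => rfl
  have hhi : ∀ i : Fin N, g (embHi N i) = highPart g i := fun _ => rfl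
  simp only [hlo, hhi]
  congr 1
  · rw [Eact_eq, Finset.sum_filter, Finset.mul_sum]
    refine Finset.sum_congr rfl fun i _ => ?_
    by_cases h : lowPart g i = 0
    · rw [if_pos h, if_pos h, Aexp_embLo, lowPart_update_lo, highPart_update_lo]
      ring
    · rw [if_neg h, if_neg h, mul_zero]
  · rw [Eact_eq, Finset.sum_filter, Finset.sum_mul, Finset.mul_sum]
    refine Finset.sum_congr rfl fun i _ => ?_
    by_cases h : highPart g i = 0
    · rw [if_pos h, if_pos h, Aexp_embHi, lowPart_update_hi, highPart_update_hi,
        zpow_add₀ hq]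
      ring
    · rw [if_neg h, if_neg h, zero_mul, mul_zero]

lemma qint_zero (q : ℂ) : qint q 0 = 0 := by unfold qint; simp

lemma Eact_smul (q : ℂ) (n : ℕ) (c : ℂ) (v : (Fin n → Fin 2) → ℂ) :
    Eact q n (c • v) = c • Eact q n v := by
  funext g
  unfold Eact
  simp only [Pi.smul_apply, smul_eq_mul, Finset.mul_sum]
  refine Finset.sum_congr rfl fun i _ => ?_
  ring

lemma Eact_sum (q : ℂ) (n : ℕ) (s : Finset ℕ) (f : ℕ → (Fin n → Fin 2) → ℂ) :
    Eact q n (∑ l ∈ s, f l) = ∑ l ∈ s, Eact q n (f l) := by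
  funext g
  rw [Finset.sum_apply]
  calc Eact q n (∑ l ∈ s, f l) g
      = ∑ i ∈ Finset.univ.filter (fun i => g i = 0), ∑ l ∈ s,
          q ^ (Aexp g i) * f l (Function.update g i 1) := by
        rw [Eact_eq]
        refine Finset.sum_congr rfl fun i _ => ?_
        rw [Finset.sum_apply, Finset.mul_sum]
    _ = ∑ l ∈ s, ∑ i ∈ Finset.univ.filter (fun i => g i = 0),
          q ^ (Aexp g i) * f l (Function.update g i 1) := Finset.sum_comm
    _ = ∑ l ∈ s, Eact q n (f l) g := by
        refine Finset.sum_congr rfl fun l _ => ?_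
        rw [Eact_eq]

def Pfun (q : ℂ) (N l : ℕ) : (Fin (2 * N) → Fin 2) → ℂ :=
  fun g => theta q N l (highPart g) * theta q N (N - l) (lowPart g)

def Rfun (q : ℂ) (N l : ℕ) : (Fin (2 * N) → Fin 2) → ℂ :=
  fun g => theta q N l (highPart g) * theta q N (N - l - 1) (lowPart g)

def R'fun (q : ℂ) (N l : ℕ) : (Fin (2 * N) → Fin 2) → ℂ :=
  fun g => theta q N (l - 1) (highPart g) * theta q N (N - l) (lowPart g)

lemma R'fun_succ (q : ℂ) (N l : ℕ) : R'fun q N (l + 1) = Rfun q N l := by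
  unfold R'fun Rfun
  rw [show N - (l + 1) = N - l - 1 from (Nat.sub_sub N l 1).symm, Nat.add_sub_cancel]

lemma rainbow_eq (q : ℂ) (N : ℕ) :
    rainbowVec q N = (((q ^ (-2 : ℤ) - 1) ^ N)⁻¹ * (q + q⁻¹) ^ N / qfact q (N + 1)) •
      ∑ l ∈ Finset.range (N + 1),
        ((-1 : ℂ) ^ l * q ^ ((l : ℤ) * ((N : ℤ) - (l : ℤ) - 1))) • Pfun q N l := rfl

theorem rainbowVec_highest_weight' (q : ℂ) (hq : q ≠ 0)
    (hroot : ∀ n : ℕ, 0 < n → q ^ n ≠ 1) (N : ℕ) :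
    Eact q (2 * N) (rainbowVec q N) = 0 ∧
    Kact q (2 * N) (rainbowVec q N) = rainbowVec q N := by
  have hq2 : q - q⁻¹ ≠ 0 := by
    intro h
    apply hroot 2 (by norm_num)
    have h' : q * (q - q⁻¹) = q ^ 2 - 1 := by field_simp
    rw [h, mul_zero] at h'
    have := sub_eq_zero.mp h'.symm
    exact this
  set C : ℂ := ((q ^ (-2 : ℤ) - 1) ^ N)⁻¹ * (q + q⁻¹) ^ N / qfact q (N + 1) with hC
  set c : ℕ → ℂ := fun l => (-1 : ℂ) ^ l * q ^ ((l : ℤ) * ((N : ℤ) - (l : ℤ) - 1)) with hc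
  have hrb : rainbowVec q N = C • ∑ l ∈ Finset.range (N + 1), c l • Pfun q N l := rainbow_eq q N
  have hPsupp : ∀ l, l ∈ Finset.range (N + 1) → ∀ g : Fin (2 * N) → Fin 2,
      wt g ≠ N → Pfun q N l g = 0 := by
    intro l hl g hg
    simp only [Finset.mem_range] at hl
    unfold Pfun
    by_cases h1 : theta q N l (highPart g) = 0
    · rw [h1, zero_mul]
    · have hwh : wt (highPart g) = l := by
        by_contra hw; exact h1 (theta_supp q N l _ hw)
      by_cases h2 : theta q N (N - l) (lowPart g) = 0
      · rw [h2, mul_zero]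
      · have hwl : wt (lowPart g) = N - l := by
          by_contra hw; exact h2 (theta_supp q N (N - l) _ hw)
        exfalso
        apply hg
        rw [wt_split g, hwh, hwl]
        omega
  constructor
  · -- E part
    rw [hrb, Eact_smul, Eact_sum]
    have hsum : ∑ l ∈ Finset.range (N + 1), Eact q (2 * N) (c l • Pfun q N l)
        = ∑ l ∈ Finset.range (N + 1), c l • Eact q (2 * N) (Pfun q N l) :=
      Finset.sum_congr rfl fun l _ => Eact_smul q (2 * N) (c l) (Pfun q N l)
    rw [hsum]
    have hterm : ∀ l ∈ Finset.range (N + 1),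
        c l • Eact q (2 * N) (Pfun q N l)
          = (qint q ((N : ℤ) - (l : ℤ)) * qint q ((l : ℤ) + 1) * c l) • Rfun q N l
            + (qint q (l : ℤ) * qint q ((N : ℤ) + 1 - (l : ℤ))
                * (c l * q ^ (2 * (l : ℤ) - (N : ℤ)))) • R'fun q N l := by
      intro l hl
      simp only [Finset.mem_range] at hl
      have hlN : l ≤ N := by omega
      funext g
      simp only [Pi.smul_apply, Pi.add_apply, smul_eq_mul]
      have hsplit := Eact_split q hq N (theta q N l) (theta q N (N - l)) g
      rw [show Pfun q N l = fun g' => theta q N l (highPart g') * theta q N (N - l) (lowPart g')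
        from rfl, hsplit]
      have h1 : theta q N l (highPart g) * Eact q N (theta q N (N - l)) (lowPart g)
          = qint q ((N : ℤ) - (l : ℤ)) * qint q ((l : ℤ) + 1)
            * (theta q N l (highPart g) * theta q N (N - l - 1) (lowPart g)) := by
        rcases eq_or_lt_of_le hlN with hEq | hLt
        · subst hEq
          rw [Nat.sub_self, Eact_theta_zero]
          simp [qint_zero]
        · have hNl : N - l = (N - l - 1) + 1 := by omega
          have hE := congrFun (Eact_theta q hq hq2 N (N - l - 1)) (lowPart g)
          rw [← hNl] at hE
          have e1 : ((N - l - 1 : ℕ) : ℤ) + 1 = (N : ℤ) - (l : ℤ) := by omega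
          have e2 : (N : ℤ) - ((N - l - 1 : ℕ) : ℤ) = (l : ℤ) + 1 := by omega
          rw [hE, e1, e2]
          ring
      have h2 : q ^ ((N : ℤ) - 2 * (wt (lowPart g) : ℤ))
            * (Eact q N (theta q N l) (highPart g) * theta q N (N - l) (lowPart g))
          = qint q (l : ℤ) * qint q ((N : ℤ) + 1 - (l : ℤ)) * q ^ (2 * (l : ℤ) - (N : ℤ))
            * (theta q N (l - 1) (highPart g) * theta q N (N - l) (lowPart g)) := by
        rcases Nat.eq_zero_or_pos l with hEq | hPos
        · subst hEq
          rw [Eact_theta_zero]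
          simp [qint_zero]
        · have hl1 : l = (l - 1) + 1 := by omega
          have hE := congrFun (Eact_theta q hq hq2 N (l - 1)) (highPart g)
          rw [← hl1] at hE
          have e1 : ((l - 1 : ℕ) : ℤ) + 1 = (l : ℤ) := by omega
          have e2 : (N : ℤ) - ((l - 1 : ℕ) : ℤ) = (N : ℤ) + 1 - (l : ℤ) := by omega
          rw [hE, e1, e2]
          by_cases h0 : theta q N (N - l) (lowPart g) = 0
          · rw [h0]; ring
          · have hwl : wt (lowPart g) = N - l := by
              by_contra hw; exact h0 (theta_supp q N (N - l) _ hw)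
            rw [hwl]
            have e3 : (N : ℤ) - 2 * ((N - l : ℕ) : ℤ) = 2 * (l : ℤ) - (N : ℤ) := by omega
            rw [e3]
            ring
      rw [h1, h2]
      unfold Rfun R'fun
      ring
    rw [Finset.sum_congr rfl hterm, Finset.sum_add_distrib]
    have hcrel : ∀ l : ℕ, c (l + 1) * q ^ (2 * ((l : ℤ) + 1) - (N : ℤ)) = -c l := by
      intro l
      rw [hc]
      simp only []
      push_cast
      rw [mul_assoc, ← zpow_add₀ hq]
      have e : ((l : ℤ) + 1) * ((N : ℤ) - ((l : ℤ) + 1) - 1) + (2 * ((l : ℤ) + 1) - (N : ℤ))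
          = (l : ℤ) * ((N : ℤ) - (l : ℤ) - 1) := by ring
      rw [e, pow_succ]
      ring
    have hA : ∑ l ∈ Finset.range (N + 1),
        (qint q ((N : ℤ) - (l : ℤ)) * qint q ((l : ℤ) + 1) * c l) • Rfun q N l
        = ∑ l ∈ Finset.range N,
          (qint q ((N : ℤ) - (l : ℤ)) * qint q ((l : ℤ) + 1) * c l) • Rfun q N l := by
      rw [Finset.sum_range_succ, sub_self, qint_zero, zero_mul, zero_mul, zero_smul, add_zero]
    have hB : ∑ l ∈ Finset.range (N + 1),
        (qint q (l : ℤ) * qint q ((N : ℤ) + 1 - (l : ℤ)) * (c l * q ^ (2 * (l : ℤ) - (N : ℤ)))) • R'fun q N l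
        = ∑ l ∈ Finset.range N,
          (qint q ((l : ℤ) + 1) * qint q ((N : ℤ) - (l : ℤ))
            * (c (l + 1) * q ^ (2 * ((l : ℤ) + 1) - (N : ℤ)))) • Rfun q N l := by
      rw [Finset.sum_range_succ']
      simp only [Nat.cast_zero, qint_zero, zero_mul, zero_smul, add_zero]
      refine Finset.sum_congr rfl fun l hl => ?_
      rw [R'fun_succ]
      rw [show ((l + 1 : ℕ) : ℤ) = (l : ℤ) + 1 by push_cast; ring]
      rw [show (N : ℤ) + 1 - ((l : ℤ) + 1) = (N : ℤ) - (l : ℤ) by ring]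
    rw [hA, hB, ← Finset.sum_add_distrib]
    have hz : ∑ l ∈ Finset.range N,
        ((qint q ((N : ℤ) - (l : ℤ)) * qint q ((l : ℤ) + 1) * c l) • Rfun q N l
          + (qint q ((l : ℤ) + 1) * qint q ((N : ℤ) - (l : ℤ))
              * (c (l + 1) * q ^ (2 * ((l : ℤ) + 1) - (N : ℤ)))) • Rfun q N l) = 0 := by
      refine Finset.sum_eq_zero fun l hl => ?_
      rw [← add_smul]
      have : qint q ((N : ℤ) - (l : ℤ)) * qint q ((l : ℤ) + 1) * c l
          + qint q ((l : ℤ) + 1) * qint q ((N : ℤ) - (l : ℤ))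
            * (c (l + 1) * q ^ (2 * ((l : ℤ) + 1) - (N : ℤ))) = 0 := by
        rw [hcrel l]
        ring
      rw [this, zero_smul]
    rw [hz, smul_zero]
  · -- K part
    funext g
    unfold Kact
    by_cases h : rainbowVec q N g = 0
    · rw [h, mul_zero]
    · have hw : wt g = N := by
        by_contra hw
        apply h
        rw [hrb]
        simp only [Pi.smul_apply, smul_eq_mul, Finset.sum_apply]
        rw [Finset.sum_eq_zero, mul_zero]
        intro l hl
        rw [hPsupp l hl g hw, mul_zero]
      rw [hw]
      have e : ((2 * N : ℕ) : ℤ) - 2 * ((N : ℕ) : ℤ) = 0 := by push_cast; ring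
      rw [e, zpow_zero, one_mul]

theorem rainbowVec_highest_weight (q : ℂ) (hq : q ≠ 0)
    (hroot : ∀ n : ℕ, 0 < n → q ^ n ≠ 1) (N : ℕ) :
    Eact q (2 * N) (rainbowVec q N) = 0 ∧
    Kact q (2 * N) (rainbowVec q N) = rainbowVec q N :=
  rainbowVec_highest_weight' q hq hroot N

end
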